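/- arXiv:2301.08178 — 2 statements merged into one kernel-verified Lean document; each statement's English description precedes it below -/
import Mathlib

section
/- Let T be a λ'-approximate summation tree for a sequence a_1,…,a_n (each node v labelled with an integer s̃(v) satisfying s(v) ≤ s̃(v) ≤ (1+λ')·s(v), where s(v) is the exact sum of the leaf labels below v). Define a new labelling by ŝ(v) = (1+λ')^{h(v)} · s̃(v) where h(v) is the height of v. Then ŝ is consistent: for every inner node v with children v_ℓ, v_r, ŝ(v_ℓ) + ŝ(v_r) ≤ ŝ(v). -/
inductive BTree where
  | leaf (a : ℝ)
  | node (l r : BTree)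

namespace BTree

def exactSum : BTree → ℝ
  | leaf a => a
  | node l r => exactSum l + exactSum r

def height : BTree → ℕ
  | leaf _ => 0
  | node l r => max (height l) (height r) + 1

inductive IsSubtree : BTree → BTree → Prop
  | refl (t : BTree) : IsSubtree t t
  | left {t l r : BTree} : IsSubtree t l → IsSubtree t (node l r)
  | right {t l r : BTree} : IsSubtree t r → IsSubtree t (node l r)

end BTree

open BTree

lemma isSubtree_trans {a b c : BTree} (h1 : IsSubtree a b) (h2 : IsSubtree b c) :
    IsSubtree a c := by
  induction h2 with
  | refl => exact h1
  | left _ ih => exact IsSubtree.left ih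
  | right _ ih => exact IsSubtree.right ih

lemma exactSum_nonneg (T t : BTree) (hleaf : ∀ a : ℝ, IsSubtree (BTree.leaf a) T → 0 ≤ a)
    (ht : IsSubtree t T) : 0 ≤ exactSum t := by
  induction t with
  | leaf a => exact hleaf a ht
  | node l r ihl ihr =>
      have hl := ihl (isSubtree_trans (IsSubtree.left (IsSubtree.refl l)) ht)
      have hr := ihr (isSubtree_trans (IsSubtree.right (IsSubtree.refl r)) ht)
      simpa [exactSum] using add_nonneg hl hr

theorem rescaled_labels_consistent (lam' : ℝ) (hlam' : 0 ≤ lam') (T : BTree)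
    (lbl : BTree → ℝ)
    (hleaf : ∀ a : ℝ, IsSubtree (BTree.leaf a) T → 0 ≤ a)
    (hlbl : ∀ t : BTree, IsSubtree t T →
      exactSum t ≤ lbl t ∧ lbl t ≤ (1 + lam') * exactSum t) :
    ∀ l r : BTree, IsSubtree (BTree.node l r) T →
      (1 + lam') ^ height l * lbl l + (1 + lam') ^ height r * lbl r ≤
        (1 + lam') ^ height (BTree.node l r) * lbl (BTree.node l r) := by
  intro l r hsub
  have hone : (1:ℝ) ≤ 1 + lam' := by linarith
  have hlsub : IsSubtree l T := isSubtree_trans (IsSubtree.left (IsSubtree.refl l)) hsub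
  have hrsub : IsSubtree r T := isSubtree_trans (IsSubtree.right (IsSubtree.refl r)) hsub
  have hsl := exactSum_nonneg T l hleaf hlsub
  have hsr := exactSum_nonneg T r hleaf hrsub
  have key : ∀ t : BTree, IsSubtree t T → 0 ≤ exactSum t →
      height t ≤ max (height l) (height r) →
      (1 + lam') ^ height t * lbl t ≤
        (1 + lam') ^ (max (height l) (height r) + 1) * exactSum t := by
    intro t ht hst hht
    have h1 : (1 + lam') ^ height t * lbl t ≤
        (1 + lam') ^ height t * ((1 + lam') * exactSum t) := by
      apply mul_le_mul_of_nonneg_left (hlbl t ht).2 (by positivity)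
    have h2 : (1 + lam') ^ height t * ((1 + lam') * exactSum t) ≤
        (1 + lam') ^ (max (height l) (height r) + 1) * exactSum t := by
      rw [← mul_assoc, ← pow_succ]
      exact mul_le_mul_of_nonneg_right (pow_le_pow_right₀ hone (by omega)) hst
    linarith
  have hl := key l hlsub hsl (le_max_left _ _)
  have hr := key r hrsub hsr (le_max_right _ _)
  have hnode := (hlbl (BTree.node l r) hsub).1
  have : (1 + lam') ^ (max (height l) (height r) + 1) * exactSum (BTree.node l r) ≤
      (1 + lam') ^ (max (height l) (height r) + 1) * lbl (BTree.node l r) :=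
    mul_le_mul_of_nonneg_left hnode (by positivity)
  simp only [height, exactSum] at *
  nlinarith [this, hl, hr]
end

section
/- Suppose arrays B_k (for k = 1..m) contain consistent λ'-approximate prefix sums for blocks A_k of lengths L each, C is the sequence with C[1] = 0 and C[k] = B_{k−1}[L] for k ≥ 2, D contains consistent λ'-approximate prefix sums for C, and B is defined by B[i] = B_{k_i}[i'] + D[k_i] where i = L·(k_i − 1) + i'. If (1+λ')^2 ≤ 1+λ, then B contains consistent λ-approximate prefix sums for the concatenation A of the blocks A_1,…,A_m. -/
/-- `s` is a consistent `lam`-approximate prefix sums sequence for `a` on indices `1..N`. -/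
def ConsistentApproxPrefixSums (lam : ℝ) (N : ℕ) (a s : ℕ → ℕ) : Prop :=
  (∀ i, 1 ≤ i → i ≤ N →
    ((∑ j ∈ Finset.Icc 1 i, a j : ℕ) : ℝ) ≤ (s i : ℝ) ∧
    (s i : ℝ) ≤ (1 + lam) * ((∑ j ∈ Finset.Icc 1 i, a j : ℕ) : ℝ)) ∧
  (∀ i, 2 ≤ i → i ≤ N → s (i - 1) + a i ≤ s i) ∧
  a 1 ≤ s 1

lemma divmod_helper (L q r : ℕ) (hL : 0 < L) (hr : r < L) :
    (L * q + r) / L = q ∧ (L * q + r) % L = r := by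
  constructor
  · rw [Nat.mul_add_div hL, Nat.div_eq_of_lt hr, Nat.add_zero]
  · rw [Nat.mul_add_mod, Nat.mod_eq_of_lt hr]

theorem combined_prefix_sums (lam lam' : ℝ) (hlam : 0 < lam) (hlam' : 0 < lam')
    (hcomp : (1 + lam') ^ 2 ≤ 1 + lam)
    (m L : ℕ) (hm : 1 ≤ m) (hL : 1 ≤ L)
    (A B : ℕ → ℕ → ℕ) (C D : ℕ → ℕ)
    (hB : ∀ k, 1 ≤ k → k ≤ m → ConsistentApproxPrefixSums lam' L (A k) (B k))
    (hC1 : C 1 = 0)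
    (hCk : ∀ k, 2 ≤ k → k ≤ m → C k = B (k - 1) L)
    (hD : ConsistentApproxPrefixSums lam' m C D) :
    ConsistentApproxPrefixSums lam (m * L)
      (fun i => A ((i - 1) / L + 1) ((i - 1) % L + 1))
      (fun i => B ((i - 1) / L + 1) ((i - 1) % L + 1) + D ((i - 1) / L + 1)) := by
  have hL0 : 0 < L := hL
  -- total prefix sums decomposition
  have hT : ∀ i, 1 ≤ i →
      (∑ j ∈ Finset.Icc 1 i, A ((j - 1) / L + 1) ((j - 1) % L + 1))
        = (∑ t ∈ Finset.Icc 1 ((i - 1) / L), ∑ j ∈ Finset.Icc 1 L, A t j)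
          + ∑ j ∈ Finset.Icc 1 ((i - 1) % L + 1), A ((i - 1) / L + 1) j := by
    intro i hi
    induction i, hi using Nat.le_induction with
    | base => simp
    | succ i hi IH =>
      have hdm := Nat.div_add_mod (i - 1) L
      obtain ⟨q, hq⟩ : ∃ q, (i - 1) / L = q := ⟨_, rfl⟩
      obtain ⟨r, hr⟩ : ∃ r, (i - 1) % L = r := ⟨_, rfl⟩
      rw [hq, hr] at hdm IH
      have hrL : r < L := hr ▸ Nat.mod_lt _ hL0
      rw [Finset.sum_Icc_succ_top (by omega : 1 ≤ i + 1)]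
      simp only [Nat.add_sub_cancel]
      rw [IH]
      by_cases hcase : r + 1 < L
      · have e : i = L * q + (r + 1) := by omega
        obtain ⟨hd, hmo⟩ := divmod_helper L q (r + 1) hL0 hcase
        rw [e, hd, hmo]
        conv_rhs => rw [Finset.sum_Icc_succ_top (by omega : 1 ≤ r + 1 + 1)]
        omega
      · have hrL1 : r + 1 = L := by omega
        have hms : L * (q + 1) = L * q + L := Nat.mul_succ L q
        have e : i = L * (q + 1) + 0 := by omega
        obtain ⟨hd, hmo⟩ := divmod_helper L (q + 1) 0 hL0 hL0
        rw [e, hd, hmo]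
        conv_rhs => rw [Finset.sum_Icc_succ_top (by omega : 1 ≤ q + 1)]
        rw [show (0:ℕ) + 1 = 1 from rfl, Finset.Icc_self, Finset.sum_singleton, hrL1]
  -- sum of C equals sum of block totals of B
  have hCsum : ∀ k, 1 ≤ k → k ≤ m →
      (∑ t ∈ Finset.Icc 1 k, C t) = ∑ t ∈ Finset.Icc 1 (k - 1), B t L := by
    intro k hk
    induction k, hk using Nat.le_induction with
    | base => intro _; simp [hC1]
    | succ k hk IH =>
      intro hkm
      rw [Finset.sum_Icc_succ_top (by omega : 1 ≤ k + 1), IH (by omega),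
        hCk (k + 1) (by omega) hkm, show k + 1 - 1 = k from by omega]
      conv_rhs => rw [show k = (k - 1) + 1 from by omega,
        Finset.sum_Icc_succ_top (by omega : 1 ≤ (k - 1) + 1)]
      rw [show k - 1 + 1 = k from by omega]
  obtain ⟨hD1, hD2, hD3⟩ := hD
  refine ⟨?_, ?_, ?_⟩
  · -- approximation bounds
    intro i hi hiN
    have hdm := Nat.div_add_mod (i - 1) L
    obtain ⟨q, hq⟩ : ∃ q, (i - 1) / L = q := ⟨_, rfl⟩
    obtain ⟨r, hr⟩ : ∃ r, (i - 1) % L = r := ⟨_, rfl⟩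
    rw [hq, hr] at hdm
    have hrL : r < L := hr ▸ Nat.mod_lt _ hL0
    have hkm : q + 1 ≤ m := by
      have := (Nat.div_lt_iff_lt_mul hL0).mpr (show i - 1 < m * L by omega)
      omega
    simp only []
    rw [hT i hi, hq, hr]
    obtain ⟨hBk, _, _⟩ := hB (q + 1) (by omega) hkm
    have hBki := hBk (r + 1) (by omega) (by omega)
    have hDk := hD1 (q + 1) (by omega) hkm
    rw [hCsum (q + 1) (by omega) hkm, show q + 1 - 1 = q from by omega] at hDk
    constructor
    · -- lower bound
      have h1 : (∑ j ∈ Finset.Icc 1 (r + 1), A (q + 1) j) ≤ B (q + 1) (r + 1) := by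
        exact_mod_cast hBki.1
      have h2 : (∑ t ∈ Finset.Icc 1 q, B t L) ≤ D (q + 1) := by
        exact_mod_cast hDk.1
      have h3 : (∑ t ∈ Finset.Icc 1 q, ∑ j ∈ Finset.Icc 1 L, A t j)
          ≤ ∑ t ∈ Finset.Icc 1 q, B t L := by
        refine Finset.sum_le_sum fun t ht => ?_
        rw [Finset.mem_Icc] at ht
        exact_mod_cast ((hB t ht.1 (by omega)).1 L hL le_rfl).1
      have key : (∑ t ∈ Finset.Icc 1 q, ∑ j ∈ Finset.Icc 1 L, A t j)
          + ∑ j ∈ Finset.Icc 1 (r + 1), A (q + 1) j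
          ≤ B (q + 1) (r + 1) + D (q + 1) := by omega
      exact_mod_cast key
    · -- upper bound
      have hSig : ((∑ t ∈ Finset.Icc 1 q, B t L : ℕ) : ℝ)
          ≤ (1 + lam') * ((∑ t ∈ Finset.Icc 1 q, ∑ j ∈ Finset.Icc 1 L, A t j : ℕ) : ℝ) := by
        push_cast
        rw [Finset.mul_sum]
        refine Finset.sum_le_sum fun t ht => ?_
        rw [Finset.mem_Icc] at ht
        have := ((hB t ht.1 (by omega)).1 L hL le_rfl).2
        push_cast at this ⊢
        exact this
      have h1 : (B (q + 1) (r + 1) : ℝ)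
          ≤ (1 + lam') * ((∑ j ∈ Finset.Icc 1 (r + 1), A (q + 1) j : ℕ) : ℝ) := hBki.2
      have h2 : (D (q + 1) : ℝ)
          ≤ (1 + lam') * ((1 + lam') *
            ((∑ t ∈ Finset.Icc 1 q, ∑ j ∈ Finset.Icc 1 L, A t j : ℕ) : ℝ)) := by
        refine le_trans hDk.2 ?_
        exact mul_le_mul_of_nonneg_left hSig (by linarith)
      set Sb : ℝ := ((∑ t ∈ Finset.Icc 1 q, ∑ j ∈ Finset.Icc 1 L, A t j : ℕ) : ℝ) with hSb
      set Sk : ℝ := ((∑ j ∈ Finset.Icc 1 (r + 1), A (q + 1) j : ℕ) : ℝ) with hSk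
      have hSb0 : 0 ≤ Sb := Nat.cast_nonneg _
      have hSk0 : 0 ≤ Sk := Nat.cast_nonneg _
      have hle1 : (1 + lam') ≤ (1 + lam') ^ 2 := by nlinarith
      have h3 : (1 + lam') * Sk ≤ (1 + lam') ^ 2 * Sk :=
        mul_le_mul_of_nonneg_right hle1 hSk0
      have h4 : (1 + lam') ^ 2 * (Sb + Sk) ≤ (1 + lam) * (Sb + Sk) :=
        mul_le_mul_of_nonneg_right hcomp (by linarith)
      have h5 : (1 + lam') * ((1 + lam') * Sb) = (1 + lam') ^ 2 * Sb := by ring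
      have h6 : (1 + lam') ^ 2 * (Sb + Sk) = (1 + lam') ^ 2 * Sb + (1 + lam') ^ 2 * Sk := by
        ring
      push_cast
      push_cast at h1 h2 h3 h4 h5 h6 hSb hSk
      rw [← hSb, ← hSk]
      linarith
  · -- consistency
    intro i hi hiN
    have hdm := Nat.div_add_mod (i - 1) L
    obtain ⟨q, hq⟩ : ∃ q, (i - 1) / L = q := ⟨_, rfl⟩
    obtain ⟨r, hr⟩ : ∃ r, (i - 1) % L = r := ⟨_, rfl⟩
    rw [hq, hr] at hdm
    have hrL : r < L := hr ▸ Nat.mod_lt _ hL0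
    have hkm : q + 1 ≤ m := by
      have := (Nat.div_lt_iff_lt_mul hL0).mpr (show i - 1 < m * L by omega)
      omega
    simp only []
    rw [hq, hr]
    by_cases hcase : 1 ≤ r
    · -- inside a block
      have e : i - 1 - 1 = L * q + (r - 1) := by omega
      obtain ⟨hd, hmo⟩ := divmod_helper L q (r - 1) hL0 (by omega)
      rw [e, hd, hmo, show r - 1 + 1 = r from by omega]
      obtain ⟨_, hBcons, _⟩ := hB (q + 1) (by omega) hkm
      have hc := hBcons (r + 1) (by omega) (by omega)
      rw [show r + 1 - 1 = r from by omega] at hc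
      omega
    · -- crossing a block boundary
      have hr0 : r = 0 := by omega
      have hq1 : 1 ≤ q := by
        rcases Nat.eq_zero_or_pos q with h | h
        · subst h; simp at hdm; omega
        · exact h
      have hms : L * q = L * (q - 1) + L := by
        conv_lhs => rw [show q = (q - 1) + 1 from by omega, Nat.mul_succ]
      have e : i - 1 - 1 = L * (q - 1) + (L - 1) := by omega
      obtain ⟨hd, hmo⟩ := divmod_helper L (q - 1) (L - 1) hL0 (by omega)
      rw [e, hd, hmo, show q - 1 + 1 = q from by omega,
        show L - 1 + 1 = L from by omega, hr0]
      have hDc := hD2 (q + 1) (by omega) hkm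
      rw [show q + 1 - 1 = q from by omega, hCk (q + 1) (by omega) hkm,
        show q + 1 - 1 = q from by omega] at hDc
      have hA1 : A (q + 1) (0 + 1) ≤ B (q + 1) (0 + 1) := (hB (q + 1) (by omega) hkm).2.2
      omega
  · -- base
    simp only []
    rw [show (1:ℕ) - 1 = 0 from rfl, Nat.zero_div, Nat.zero_mod]
    simp only [Nat.zero_add]
    have := (hB 1 le_rfl hm).2.2
    omega
end
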